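/- Let $C^\bullet$, $D^\bullet$ be bounded above cochain complexes of objects in an abelian category. If for each $i$ the total hom complex $\mathrm{hom}^\bullet(C^i, D^\bullet)$ is acyclic, then the total hom complex $\mathrm{hom}^\bullet(C^\bullet, D^\bullet)$ is acyclic. -/

import Mathlib

open CategoryTheory CategoryTheory.Limits CochainComplex.HomComplex

open scoped Classical

/-- From the elementwise acyclicity of `hom•(single Cⁱ, D•)`, extract the statement
that every morphism `C.X i ⟶ D.X m` killed by postcomposition with the differential
is a "coboundary", i.e. factors as `g ≫ D.d (m-1) m`. -/
lemma stmt10_auxh {A : Type*} [Category A] [Abelian A] (C D : CochainComplex A ℤ) (i m : ℤ)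
    (h : ∀ n : ℤ,
        ∀ x : Cochain ((HomologicalComplex.single A (ComplexShape.up ℤ) 0).obj (C.X i)) D n,
          δ n (n + 1) x = 0 →
          ∃ y : Cochain ((HomologicalComplex.single A (ComplexShape.up ℤ) 0).obj (C.X i)) D
              (n - 1), δ (n - 1) n y = x)
    (f : C.X i ⟶ D.X m) (hf : f ≫ D.d m (m + 1) = 0) :
    ∃ g : C.X i ⟶ D.X (m - 1), g ≫ D.d (m - 1) m = f := by
  let x : Cochain ((HomologicalComplex.single A (ComplexShape.up ℤ) 0).obj (C.X i)) D m :=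
    Cochain.mk (fun p q hpq =>
      if hp : p = 0 then
        (HomologicalComplex.singleObjXIsoOfEq (ComplexShape.up ℤ) 0 (C.X i) p hp).hom ≫ f ≫
          (D.XIsoOfEq (show m = q by omega)).hom
      else 0)
  have hx : δ m (m + 1) x = 0 := by
    ext p q hpq
    rw [δ_v m (m + 1) rfl x p q hpq (q - 1) (p + 1) rfl rfl]
    simp only [HomologicalComplex.single_obj_d, zero_comp, smul_zero, add_zero,
      Cochain.zero_v, Cochain.mk_v, x]
    by_cases hp : p = 0
    · subst hp
      obtain rfl : q = m + 1 := by omega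
      rw [dif_pos rfl]
      simp only [Category.assoc, HomologicalComplex.XIsoOfEq_hom_comp_d]
      rw [hf, comp_zero]
    · rw [dif_neg hp, zero_comp]
  obtain ⟨y, hy⟩ := h m x hx
  refine ⟨(HomologicalComplex.singleObjXIsoOfEq (ComplexShape.up ℤ) 0 (C.X i) 0 rfl).inv ≫
    y.v 0 (m - 1) (by omega), ?_⟩
  have e := Cochain.congr_v hy 0 m (by omega)
  rw [δ_v (m - 1) m (by omega) y 0 m (by omega) (m - 1) 1 rfl (by omega)] at e
  simp only [HomologicalComplex.single_obj_d, zero_comp, smul_zero, add_zero,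
    Cochain.mk_v, dif_pos rfl, x] at e
  rw [Category.assoc, e]
  simp [HomologicalComplex.XIsoOfEq]

/-- The recursively constructed primitive of a closed cochain: `stmt10_auxF k p` is the
component at `p` of the primitive, correctly defined once `n₀ - p ≤ k`. -/
noncomputable def stmt10_auxF {A : Type*} [Category A] [Abelian A]
    (C D : CochainComplex A ℤ) (n : ℤ) (x : Cochain C D n)
    (h' : ∀ (i m : ℤ) (f : C.X i ⟶ D.X m), f ≫ D.d m (m + 1) = 0 →
      ∃ g : C.X i ⟶ D.X (m - 1), g ≫ D.d (m - 1) m = f)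
    (n₀ : ℤ) : ∀ (_ : ℕ) (p : ℤ), (C.X p ⟶ D.X (p + n - 1))
  | 0 => fun _ => 0
  | (k + 1) => fun p =>
      if n₀ ≤ p then 0
      else if hw : (x.v p (p + n) rfl - n.negOnePow • (C.d p (p + 1) ≫
            stmt10_auxF C D n x h' n₀ k (p + 1) ≫
              (D.XIsoOfEq (show p + 1 + n - 1 = p + n by omega)).hom))
          ≫ D.d (p + n) (p + n + 1) = 0
        then (h' p (p + n) _ hw).choose
        else 0

/-- Let `C•`, `D•` be bounded above cochain complexes in an abelian category.  If for each
`i` the total hom complex `hom•(Cⁱ, D•)` is acyclic, then the total hom complex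
`hom•(C•, D•)` is acyclic.  (Acyclicity of a hom complex is stated elementwise: every
`δ`-closed cochain is a `δ`-coboundary.) -/
theorem stmt10 {A : Type*} [Category A] [Abelian A]
    (C D : CochainComplex A ℤ)
    (hC : ∃ n : ℤ, ∀ i : ℤ, n ≤ i → IsZero (C.X i))
    (hD : ∃ n : ℤ, ∀ i : ℤ, n ≤ i → IsZero (D.X i))
    (h : ∀ i : ℤ, ∀ n : ℤ,
        ∀ x : Cochain ((HomologicalComplex.single A (ComplexShape.up ℤ) 0).obj (C.X i)) D n,
          δ n (n + 1) x = 0 →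
          ∃ y : Cochain ((HomologicalComplex.single A (ComplexShape.up ℤ) 0).obj (C.X i)) D
              (n - 1), δ (n - 1) n y = x) :
    ∀ n : ℤ, ∀ x : Cochain C D n, δ n (n + 1) x = 0 →
      ∃ y : Cochain C D (n - 1), δ (n - 1) n y = x := by
  obtain ⟨n₀, hC⟩ := hC
  intro n x hx
  have h' : ∀ (i m : ℤ) (f : C.X i ⟶ D.X m), f ≫ D.d m (m + 1) = 0 →
      ∃ g : C.X i ⟶ D.X (m - 1), g ≫ D.d (m - 1) m = f :=
    fun i m f hf => stmt10_auxh C D i m (h i) f hf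
  set y : Cochain C D (n - 1) := Cochain.mk (fun p q hpq =>
    stmt10_auxF C D n x h' n₀ ((n₀ - p).toNat) p ≫
      (D.XIsoOfEq (show p + n - 1 = q by omega)).hom) with hy
  have key : ∀ (k : ℕ) (p q : ℤ) (hpq : p + n = q), n₀ - p ≤ (k : ℤ) →
      (δ (n - 1) n y).v p q hpq = x.v p q hpq := by
    intro k
    induction k with
    | zero =>
      intro p q hpq hk
      exact ((hC p (by omega)).eq_of_src _ _)
    | succ k ih =>
      intro p q hpq hk
      by_cases hp : n₀ ≤ p
      · exact ((hC p hp).eq_of_src _ _)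
      obtain rfl : q = p + n := by omega
      -- the equation at p+1
      have e1 := ih (p + 1) (p + n + 1) (by omega) (by omega)
      rw [δ_v (n - 1) n (by omega) y (p + 1) (p + n + 1) (by omega) (p + n) (p + 2)
        (by omega) (by omega)] at e1
      have e2 : y.v (p + 1) (p + n) (by omega) ≫ D.d (p + n) (p + n + 1) =
          x.v (p + 1) (p + n + 1) (by omega) -
            n.negOnePow • (C.d (p + 1) (p + 2) ≫ y.v (p + 2) (p + n + 1) (by omega)) := by
        rw [← e1]; abel
      -- the closedness of x at p
      have e3 : (δ n (n + 1) x).v p (p + n + 1) (by omega) = 0 := by rw [hx]; rfl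
      rw [δ_v n (n + 1) rfl x p (p + n + 1) (by omega) (p + n) (p + 1) (by omega) rfl] at e3
      have e4 : x.v p (p + n) rfl ≫ D.d (p + n) (p + n + 1) =
          n.negOnePow • (C.d p (p + 1) ≫ x.v (p + 1) (p + n + 1) (by omega)) := by
        rw [Int.negOnePow_succ, Units.neg_smul, ← sub_eq_add_neg] at e3
        exact sub_eq_zero.mp e3
      have hyv : y.v (p + 1) (p + n) (by omega) =
          stmt10_auxF C D n x h' n₀ ((n₀ - (p + 1)).toNat) (p + 1) ≫
            (D.XIsoOfEq (show p + 1 + n - 1 = p + n by omega)).hom := rfl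
      have hw : (x.v p (p + n) rfl - n.negOnePow • (C.d p (p + 1) ≫
            stmt10_auxF C D n x h' n₀ ((n₀ - (p + 1)).toNat) (p + 1) ≫
              (D.XIsoOfEq (show p + 1 + n - 1 = p + n by omega)).hom))
          ≫ D.d (p + n) (p + n + 1) = 0 := by
        rw [← hyv, Preadditive.sub_comp, Linear.units_smul_comp, Category.assoc, e2, e4]
        simp only [Preadditive.comp_sub, Linear.comp_units_smul,
          HomologicalComplex.d_comp_d_assoc, zero_comp, smul_zero, sub_zero, sub_self]
      -- now compute (δ y).v p (p+n)
      rw [δ_v (n - 1) n (by omega) y p (p + n) rfl (p + n - 1) (p + 1) (by omega) rfl]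
      have hyp : y.v p (p + n - 1) (by omega) =
          stmt10_auxF C D n x h' n₀ ((n₀ - p).toNat) p ≫
            (D.XIsoOfEq (show p + n - 1 = p + n - 1 by omega)).hom := rfl
      have hnat : (n₀ - p).toNat = (n₀ - (p + 1)).toNat + 1 := by omega
      rw [hyp, hnat]
      simp only [stmt10_auxF]
      rw [if_neg hp, dif_pos hw]
      have hspec := (h' p (p + n) _ hw).choose_spec
      simp only [HomologicalComplex.XIsoOfEq, eqToIso_refl, Iso.refl_hom, Category.comp_id,
        eqToIso.hom, eqToHom_refl]
      refine (congrArg (· + _) hspec).trans ?_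
      beta_reduce
      rw [hyv]
      abel
  refine ⟨y, ?_⟩
  ext p q hpq
  exact key ((n₀ - p).toNat) p q hpq (Int.self_le_toNat _)
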